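/- arXiv:1312.6057 — 4 statements merged into one kernel-verified Lean document; each statement's English description precedes it below -/
import Mathlib

section
/- Let A > 0, B = log(1/(1−p_e)) > 0, and let F : [0,π] → ℝ be twice differentiable with density f = F' satisfying F > 0, f > 0, f' ≤ 0 on an interval (x_l, x_u). Define TC(x) = (A/x²)(2 log F(x) + B) − A·C with C ≥ 0 constant. Then at every stationary point x* ∈ (x_l, x_u) of TC, the second derivative TC''(x*) is strictly negative. -/
open Real Set

theorem stmt6 (A B C p_e x_l x_u : ℝ) (F f f' : ℝ → ℝ)
    (hA : 0 < A) (hC : 0 ≤ C) (hpe : 0 < p_e ∧ p_e < 1)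
    (hB : B = Real.log (1 / (1 - p_e)))
    (hxl : 0 < x_l) (hxlu : x_l < x_u)
    (hF : ∀ x ∈ Ioo x_l x_u, HasDerivAt F (f x) x)
    (hf : ∀ x ∈ Ioo x_l x_u, HasDerivAt f (f' x) x)
    (hFpos : ∀ x ∈ Ioo x_l x_u, 0 < F x)
    (hfpos : ∀ x ∈ Ioo x_l x_u, 0 < f x)
    (hf'le : ∀ x ∈ Ioo x_l x_u, f' x ≤ 0) :
    ∀ x ∈ Ioo x_l x_u,
      deriv (fun x => (A / x ^ 2) * (2 * Real.log (F x) + B) - A * C) x = 0 →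
      deriv (deriv (fun x => (A / x ^ 2) * (2 * Real.log (F x) + B) - A * C)) x < 0 := by
  intro x hx hstat
  obtain ⟨hx1, hx2⟩ := hx
  have hx0 : (0:ℝ) < x := lt_trans hxl hx1
  have hxne : x ≠ 0 := ne_of_gt hx0
  set g : ℝ → ℝ := fun x => (A / x ^ 2) * (2 * Real.log (F x) + B) - A * C with hg_def
  set D1 : ℝ → ℝ := fun y => (-2*A/y^3) * (2 * Real.log (F y) + B)
      + (A/y^2) * (2 * (f y / F y)) with hD1_def
  have hupow : ∀ y : ℝ, y ≠ 0 → HasDerivAt (fun z : ℝ => A / z ^ 2) (-2*A/y^3) y := by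
    intro y hy0
    simp only [div_eq_mul_inv]
    refine (((hasDerivAt_pow 2 y).inv (pow_ne_zero 2 hy0)).const_mul A).congr_deriv ?_
    have : ((2:ℕ):ℝ) = 2 := by norm_num
    rw [this]
    field_simp
    ring
  have hderiv1 : ∀ y ∈ Ioo x_l x_u, HasDerivAt g (D1 y) y := by
    intro y hy
    have hy0 : y ≠ 0 := ne_of_gt (lt_trans hxl hy.1)
    have hFy : F y ≠ 0 := ne_of_gt (hFpos y hy)
    have hG : HasDerivAt (fun z => 2 * Real.log (F z) + B) (2 * (f y / F y)) y :=
      (((hF y hy).log hFy).const_mul 2).add_const B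
    have h2 := ((hupow y hy0).mul hG).sub_const (A * C)
    exact h2
  have hmem : Ioo x_l x_u ∈ nhds x := isOpen_Ioo.mem_nhds ⟨hx1, hx2⟩
  have heq : deriv g =ᶠ[nhds x] D1 :=
    Filter.eventuallyEq_of_mem hmem (fun y hy => (hderiv1 y hy).deriv)
  have hxmem : x ∈ Ioo x_l x_u := ⟨hx1, hx2⟩
  have hFx : F x ≠ 0 := ne_of_gt (hFpos x hxmem)
  have hu3 : HasDerivAt (fun z : ℝ => -2*A/z^3) (6*A/x^4) x := by
    simp only [div_eq_mul_inv]
    refine (((hasDerivAt_pow 3 x).inv (pow_ne_zero 3 hxne)).const_mul (-2*A)).congr_deriv ?_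
    have : ((3:ℕ):ℝ) = 3 := by norm_num
    rw [this]
    field_simp
    ring
  have hG : HasDerivAt (fun z => 2 * Real.log (F z) + B) (2 * (f x / F x)) x :=
    (((hF x hxmem).log hFx).const_mul 2).add_const B
  have hq : HasDerivAt (fun z => 2 * (f z / F z))
      (2 * ((f' x * F x - f x * f x) / (F x) ^ 2)) x :=
    (((hf x hxmem).div (hF x hxmem) hFx).const_mul 2)
  have hD1' : HasDerivAt D1
      ((6*A/x^4) * (2 * Real.log (F x) + B) + (-2*A/x^3) * (2 * (f x / F x))
        + ((-2*A/x^3) * (2 * (f x / F x))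
          + (A/x^2) * (2 * ((f' x * F x - f x * f x) / (F x) ^ 2)))) x :=
    (hu3.mul hG).add ((hupow x hxne).mul hq)
  have h2nd : deriv (deriv g) x
      = (6*A/x^4) * (2 * Real.log (F x) + B) + (-2*A/x^3) * (2 * (f x / F x))
        + ((-2*A/x^3) * (2 * (f x / F x))
          + (A/x^2) * (2 * ((f' x * F x - f x * f x) / (F x) ^ 2))) := by
    rw [heq.deriv_eq]
    exact hD1'.deriv
  have hstat0 : D1 x = 0 := by
    rw [← (hderiv1 x hxmem).deriv]
    exact hstat
  have key : (2 * Real.log (F x) + B) * F x - x * f x = 0 := by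
    have h3 : (-(x^3 * F x) / (2*A)) * D1 x
        = (2 * Real.log (F x) + B) * F x - x * f x := by
      rw [hD1_def]
      field_simp
      ring
    rw [← h3, hstat0, mul_zero]
  have hfx : 0 < f x := hfpos x hxmem
  have hFxp : 0 < F x := hFpos x hxmem
  have hf'x : f' x ≤ 0 := hf'le x hxmem
  have hGF : 2 * Real.log (F x) + B = x * f x / F x := by
    field_simp
    linarith [key]
  rw [h2nd, hGF]
  have hform : (6*A/x^4) * (x * f x / F x) + (-2*A/x^3) * (2 * (f x / F x))
        + ((-2*A/x^3) * (2 * (f x / F x))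
          + (A/x^2) * (2 * ((f' x * F x - f x * f x) / (F x) ^ 2)))
      = -2*A/x^3 * (f x / F x) + 2*A/x^2 * (f' x / F x)
        - 2*A/x^2 * (f x / F x)^2 := by
    field_simp
    ring
  rw [hform]
  have t1 : -2*A/x^3 * (f x / F x) < 0 := by
    apply mul_neg_of_neg_of_pos
    · apply div_neg_of_neg_of_pos <;> [linarith; positivity]
    · positivity
  have t2 : 2*A/x^2 * (f' x / F x) ≤ 0 := by
    apply mul_nonpos_of_nonneg_of_nonpos
    · positivity
    · exact div_nonpos_of_nonpos_of_nonneg hf'x hFxp.le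
  have t3 : 0 < 2*A/x^2 * (f x / F x)^2 := by positivity
  linarith
end

section
/- Let F be a concave, twice-differentiable error c.d.f. on [0, ε_max] with F(ε_max) = 1, density f, and let B = log(1/(1−p_e)) with 0 < p_e < 1. If f(ε_max) ≥ B/ε_max, then the transmission capacity TC(x) = (A/x²)(2 log F(x) + B) − AC (A > 0, C ≥ 0) attains its maximum over (F⁻¹(√(1−p_e)), ε_max] at x* = ε_max. -/
open Real Set

theorem stmt9 (A B C p_e epsmax x_l : ℝ) (F f f' : ℝ → ℝ)
    (hA : 0 < A) (hC : 0 ≤ C) (hpe : 0 < p_e ∧ p_e < 1)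
    (hB : B = Real.log (1 / (1 - p_e)))
    (heps : 0 < epsmax) (hepspi : epsmax ≤ π)
    (hconc : ConcaveOn ℝ (Icc 0 epsmax) F)
    (hF : ∀ x ∈ Ioc 0 epsmax, HasDerivAt F (f x) x)
    (hf : ∀ x ∈ Ioo 0 epsmax, HasDerivAt f (f' x) x)
    (hFmax : F epsmax = 1)
    (hxl : x_l ∈ Ioo 0 epsmax) (hFxl : F x_l = Real.sqrt (1 - p_e))
    (hedge : B / epsmax ≤ f epsmax) :
    ∀ x ∈ Ioc x_l epsmax,
      (A / x ^ 2) * (2 * Real.log (F x) + B) - A * C ≤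
      (A / epsmax ^ 2) * (2 * Real.log (F epsmax) + B) - A * C := by
  obtain ⟨hpe0, hpe1⟩ := hpe
  have h1pe : (0:ℝ) < 1 - p_e := by linarith
  have hBpos : 0 < B := by
    rw [hB]
    apply Real.log_pos
    rw [lt_div_iff₀ h1pe]; linarith
  have hxl0 : 0 < x_l := hxl.1
  have hxle : x_l < epsmax := hxl.2
  -- f epsmax > 0
  have hfeps : 0 < f epsmax := lt_of_lt_of_le (div_pos hBpos heps) hedge
  -- f t ≥ f epsmax for t ∈ (0, epsmax]
  have hfmono : ∀ t ∈ Ioc (0:ℝ) epsmax, f epsmax ≤ f t := by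
    intro t ht
    rcases eq_or_lt_of_le ht.2 with h | h
    · rw [h]
    · have h1 : slope F t epsmax ≤ f t :=
        hconc.slope_le_of_hasDerivAt ⟨le_of_lt ht.1, le_of_lt h⟩
          ⟨le_of_lt heps, le_refl _⟩ h (hF t ht)
      have h2 : f epsmax ≤ slope F t epsmax :=
        hconc.le_slope_of_hasDerivAt ⟨le_of_lt ht.1, le_of_lt h⟩
          ⟨le_of_lt heps, le_refl _⟩ h (hF epsmax ⟨heps, le_refl _⟩)
      linarith
  have hIccsub : Icc x_l epsmax ⊆ Ioc (0:ℝ) epsmax := fun t ht => ⟨lt_of_lt_of_le hxl0 ht.1, ht.2⟩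
  -- F is monotone on [x_l, epsmax]
  have hFcont : ContinuousOn F (Icc x_l epsmax) := fun t ht =>
    ((hF t (hIccsub ht)).continuousAt).continuousWithinAt
  have hintsub : interior (Icc x_l epsmax) ⊆ Icc x_l epsmax := interior_subset
  have hintIoo : interior (Icc x_l epsmax) = Ioo x_l epsmax := interior_Icc
  have hFmono : MonotoneOn F (Icc x_l epsmax) := by
    apply monotoneOn_of_hasDerivWithinAt_nonneg (convex_Icc _ _) hFcont
      (f' := f)
    · intro t ht
      rw [hintIoo] at ht
      exact ((hF t ⟨lt_trans hxl0 ht.1, le_of_lt ht.2⟩).hasDerivWithinAt)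
    · intro t ht
      rw [hintIoo] at ht
      exact le_of_lt (lt_of_lt_of_le hfeps (hfmono t ⟨lt_trans hxl0 ht.1, le_of_lt ht.2⟩))
  have hFxlpos : 0 < F x_l := by
    rw [hFxl]; exact Real.sqrt_pos.mpr h1pe
  have hFpos : ∀ t ∈ Icc x_l epsmax, 0 < F t := fun t ht =>
    lt_of_lt_of_le hFxlpos (hFmono ⟨le_refl _, le_of_lt hxle⟩ ht ht.1)
  have hFle1 : ∀ t ∈ Icc x_l epsmax, F t ≤ 1 := fun t ht => by
    rw [← hFmax]; exact hFmono ht ⟨le_of_lt hxle, le_refl _⟩ ht.2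
  -- auxiliary function h
  set h : ℝ → ℝ := fun t => B * t ^ 2 / epsmax ^ 2 - 2 * Real.log (F t) - B with hh
  have hanti : AntitoneOn h (Icc x_l epsmax) := by
    apply antitoneOn_of_hasDerivWithinAt_nonpos (convex_Icc _ _)
      (f' := fun t => B * (2 * t) / epsmax ^ 2 - 2 * (f t / F t))
    · apply ContinuousOn.sub
      apply ContinuousOn.sub
      · exact (continuousOn_const.mul (continuousOn_pow 2)).div_const _
      · exact continuousOn_const.mul ((hFcont.log (fun t ht => ne_of_gt (hFpos t ht))))
      · exact continuousOn_const
    · intro t ht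
      rw [hintIoo] at ht
      have hmem : t ∈ Icc x_l epsmax := Ioo_subset_Icc_self ht
      have hd1 : HasDerivAt (fun t => B * t ^ 2 / epsmax ^ 2) (B * (2 * t) / epsmax ^ 2) t := by
        have : HasDerivAt (fun t : ℝ => t ^ 2) (2 * t) t := by
          simpa using hasDerivAt_pow 2 t
        exact (this.const_mul B).div_const _
      have hd2 : HasDerivAt (fun t => Real.log (F t)) (f t / F t) t := by
        have := (hF t (hIccsub hmem)).log (ne_of_gt (hFpos t hmem))
        simpa using this
      exact (((hd1.sub (hd2.const_mul 2)).sub_const B).hasDerivWithinAt)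
    · intro t ht
      rw [hintIoo] at ht
      have hmem : t ∈ Icc x_l epsmax := Ioo_subset_Icc_self ht
      have hft : f epsmax ≤ f t := hfmono t (hIccsub hmem)
      have hFt1 : F t ≤ 1 := hFle1 t hmem
      have hFt0 : 0 < F t := hFpos t hmem
      have h1 : f t ≤ f t / F t := by
        rw [le_div_iff₀ hFt0]
        nlinarith [le_of_lt (lt_of_lt_of_le hfeps hft)]
      have h2 : B * (2 * t) / epsmax ^ 2 ≤ 2 * (B / epsmax) := by
        rw [div_le_iff₀ (by positivity)]
        have ht2 : t ≤ epsmax := le_of_lt ht.2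
        have he : 2 * (B / epsmax) * epsmax ^ 2 = 2 * B * epsmax := by
          field_simp
        rw [he]; nlinarith
      have h3 : B / epsmax ≤ f t / F t := le_trans hedge (le_trans hft h1)
      linarith
  -- main bound
  intro x hx
  have hxmem : x ∈ Icc x_l epsmax := ⟨le_of_lt hx.1, hx.2⟩
  have hx0 : 0 < x := lt_trans hxl0 hx.1
  have hkey : h epsmax ≤ h x := hanti hxmem ⟨le_of_lt hxle, le_refl _⟩ hx.2
  have hheps : h epsmax = 0 := by
    simp only [hh, hFmax, Real.log_one, mul_zero, sub_zero,
      mul_div_assoc, div_self (ne_of_gt (pow_pos heps 2)), mul_one, sub_self]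
  rw [hheps] at hkey
  -- so 2 log F x + B ≤ B x^2 / epsmax^2
  have hbound : 2 * Real.log (F x) + B ≤ B * x ^ 2 / epsmax ^ 2 := by
    simp only [hh] at hkey; linarith
  rw [hFmax, Real.log_one]
  have hLHS : (A / x ^ 2) * (2 * Real.log (F x) + B) ≤ A * B / epsmax ^ 2 := by
    have hAx : 0 < A / x ^ 2 := by positivity
    calc (A / x ^ 2) * (2 * Real.log (F x) + B)
        ≤ (A / x ^ 2) * (B * x ^ 2 / epsmax ^ 2) := by
          exact mul_le_mul_of_nonneg_left hbound (le_of_lt hAx)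
      _ = A * B / epsmax ^ 2 := by field_simp
  have : (A / epsmax ^ 2) * (2 * 0 + B) = A * B / epsmax ^ 2 := by ring
  rw [this]
  linarith
end

section
/- Let F be a concave twice-differentiable error c.d.f. on [0, ε_max], f = F', B = log(1/(1−p_e)). If f(ε_max) < B/ε_max, then the unique maximizer x* of TC(x) = (A/x²)(2 log F(x) + B) − AC over (F⁻¹(√(1−p_e)), ε_max) satisfies the equation f(x*)/F(x*) = (1/x*)·log(F(x*)²/(1−p_e)). -/
open Real Set Filter Topology

set_option maxHeartbeats 1600000 in
theorem stmt10 (A B C p_e epsmax x_l : ℝ) (F f f' : ℝ → ℝ)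
    (hA : 0 < A) (hC : 0 ≤ C) (hpe : 0 < p_e ∧ p_e < 1)
    (hB : B = Real.log (1 / (1 - p_e)))
    (heps : 0 < epsmax) (hepspi : epsmax ≤ π)
    (hconc : ConcaveOn ℝ (Icc 0 epsmax) F)
    (hF : ∀ x ∈ Ioc 0 epsmax, HasDerivAt F (f x) x)
    (hf : ∀ x ∈ Ioo 0 epsmax, HasDerivAt f (f' x) x)
    (hFmax : F epsmax = 1)
    (hxl : x_l ∈ Ioo 0 epsmax) (hFxl : F x_l = Real.sqrt (1 - p_e))
    (hedge : f epsmax < B / epsmax) :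
    ∃ xs ∈ Ioo x_l epsmax,
      (∀ x ∈ Ioo x_l epsmax,
        (A / x ^ 2) * (2 * Real.log (F x) + B) - A * C ≤
        (A / xs ^ 2) * (2 * Real.log (F xs) + B) - A * C) ∧
      f xs / F xs = (1 / xs) * Real.log (F xs ^ 2 / (1 - p_e)) ∧
      (∀ y ∈ Ioo x_l epsmax,
        (∀ x ∈ Ioo x_l epsmax,
          (A / x ^ 2) * (2 * Real.log (F x) + B) - A * C ≤
          (A / y ^ 2) * (2 * Real.log (F y) + B) - A * C) → y = xs) := by
  obtain ⟨hpe0, hpe1⟩ := hpe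
  have hp1 : 0 < 1 - p_e := by linarith
  obtain ⟨hxl0, hxle⟩ := hxl
  have hFxl_pos : 0 < F x_l := by rw [hFxl]; exact Real.sqrt_pos.mpr hp1
  have hFxl_lt1 : F x_l < 1 := by
    rw [hFxl]
    nlinarith [Real.sq_sqrt hp1.le, Real.sqrt_nonneg (1 - p_e)]
  have hBlog : B = -Real.log (1 - p_e) := by rw [hB, one_div, Real.log_inv]
  have hG_xl : 2 * Real.log (F x_l) + B = 0 := by
    rw [hFxl, Real.log_sqrt hp1.le, hBlog]; ring
  -- chord bound from concavity
  have hchord : ∀ x, x_l < x → x ≤ epsmax → F x_l < F x := by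
    intro x hx1 hx2
    have hd : 0 < epsmax - x_l := by linarith
    have ha0 : (0:ℝ) ≤ (epsmax - x) / (epsmax - x_l) := by
      apply div_nonneg <;> linarith
    have hb0 : (0:ℝ) < (x - x_l) / (epsmax - x_l) := by
      apply div_pos <;> linarith
    have hab : (epsmax - x) / (epsmax - x_l) + (x - x_l) / (epsmax - x_l) = 1 := by
      field_simp
      ring
    have hcomb : ((epsmax - x) / (epsmax - x_l)) • x_l
        + ((x - x_l) / (epsmax - x_l)) • epsmax = x := by
      simp only [smul_eq_mul]; field_simp; ring
    have hkey := hconc.2 (mem_Icc.mpr ⟨hxl0.le, hxle.le⟩)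
      (mem_Icc.mpr ⟨heps.le, le_rfl⟩) ha0 hb0.le hab
    rw [hcomb] at hkey
    simp only [smul_eq_mul, hFmax, mul_one] at hkey
    nlinarith
  have hFpos : ∀ x, x_l ≤ x → x ≤ epsmax → 0 < F x := by
    intro x h1 h2
    rcases eq_or_lt_of_le h1 with rfl | h
    · exact hFxl_pos
    · exact hFxl_pos.trans (hchord x h h2)
  have hGpos : ∀ x, x_l < x → x ≤ epsmax → 0 < 2 * Real.log (F x) + B := by
    intro x h1 h2
    have := Real.log_lt_log hFxl_pos (hchord x h1 h2)
    linarith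
  set TC : ℝ → ℝ := fun x => (A / x ^ 2) * (2 * Real.log (F x) + B) - A * C with hTCdef
  set ψ : ℝ → ℝ := fun x => x * f x / F x - (2 * Real.log (F x) + B) with hψdef
  -- derivative of TC
  have hTC' : ∀ x, x_l ≤ x → x ≤ epsmax →
      HasDerivAt TC (2 * A / x ^ 3 * ψ x) x := by
    intro x h1 h2
    have hx0 : 0 < x := hxl0.trans_le h1
    have hFx : 0 < F x := hFpos x h1 h2
    have hdF := hF x ⟨hx0, h2⟩
    have hpow : HasDerivAt (fun y : ℝ => y ^ 2) (2 * x ^ 1) x := by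
      simpa using hasDerivAt_pow 2 x
    have h1' : HasDerivAt (fun y : ℝ => A / y ^ 2)
        ((0 * x ^ 2 - A * (2 * x ^ 1)) / (x ^ 2) ^ 2) x :=
      (hasDerivAt_const x A).div hpow (pow_ne_zero 2 hx0.ne')
    have h2' : HasDerivAt (fun y => 2 * Real.log (F y) + B) (2 * (f x / F x)) x :=
      ((hdF.log hFx.ne').const_mul 2).add_const B
    have hmul := (h1'.mul h2').sub_const (A * C)
    refine hmul.congr_deriv ?_
    simp only [hψdef]
    field_simp
    ring
  have hTCcont : ContinuousOn TC (Icc x_l epsmax) :=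
    fun x hx => ((hTC' x hx.1 hx.2).continuousAt).continuousWithinAt
  obtain ⟨xs, hxsI, hxsmax⟩ :=
    isCompact_Icc.exists_isMaxOn (nonempty_Icc.mpr hxle.le) hTCcont
  rw [isMaxOn_iff] at hxsmax
  -- xs is not the left endpoint
  have hzmem : (x_l + epsmax) / 2 ∈ Ioo x_l epsmax := ⟨by linarith, by linarith⟩
  have hTCxl : TC x_l = -(A * C) := by simp [hTCdef, hG_xl]
  have hTCz_gt : TC x_l < TC ((x_l + epsmax) / 2) := by
    have hGz := hGpos _ hzmem.1 hzmem.2.le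
    have hz0 : 0 < A / ((x_l + epsmax) / 2) ^ 2 := by
      have : 0 < (x_l + epsmax) / 2 := by linarith
      positivity
    rw [hTCxl]
    simp only [hTCdef]
    nlinarith
  have hxs_ne_l : xs ≠ x_l := by
    intro h
    have hle := hxsmax _ (Ioo_subset_Icc_self hzmem)
    rw [h] at hle
    linarith
  -- xs is not the right endpoint
  have hψeps : ψ epsmax < 0 := by
    have hfe : f epsmax * epsmax < B := (lt_div_iff₀ heps).mp hedge
    simp only [hψdef, hFmax, Real.log_one, div_one, mul_zero]
    nlinarith
  have hxs_ne_r : xs ≠ epsmax := by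
    intro h
    have hd : 2 * A / epsmax ^ 3 * ψ epsmax < 0 :=
      mul_neg_of_pos_of_neg (by positivity) hψeps
    have hder := hTC' epsmax hxle.le le_rfl
    have hslope := hasDerivAt_iff_tendsto_slope.mp hder
    have hne : (𝓝[Ioo x_l epsmax] epsmax).NeBot := by
      rw [← mem_closure_iff_nhdsWithin_neBot, closure_Ioo hxle.ne]
      exact right_mem_Icc.mpr hxle.le
    have hlef : 𝓝[Ioo x_l epsmax] epsmax ≤ 𝓝[≠] epsmax :=
      nhdsWithin_mono _ (fun y hy => ne_of_lt hy.2)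
    have hev : ∀ᶠ y in 𝓝[Ioo x_l epsmax] epsmax, slope TC epsmax y < 0 :=
      (hslope.mono_left hlef).eventually_lt_const hd
    obtain ⟨y, hys, hyI⟩ := (hev.and self_mem_nhdsWithin).exists
    rw [slope_def_field] at hys
    have hy_lt : y - epsmax < 0 := by linarith [hyI.2]
    have hnum : 0 < TC y - TC epsmax := by
      rcases div_neg_iff.mp hys with ⟨h1, h2⟩ | ⟨h1, h2⟩
      · exact h1
      · linarith
    have hle := hxsmax y (Ioo_subset_Icc_self hyI)
    rw [h] at hle
    linarith
  have hxsIoo : xs ∈ Ioo x_l epsmax :=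
    ⟨lt_of_le_of_ne hxsI.1 (Ne.symm hxs_ne_l), lt_of_le_of_ne hxsI.2 hxs_ne_r⟩
  have hmaxIoo : ∀ x ∈ Ioo x_l epsmax, TC x ≤ TC xs :=
    fun x hx => hxsmax x (Ioo_subset_Icc_self hx)
  -- critical point equation at any interior maximizer
  have hcrit : ∀ y ∈ Ioo x_l epsmax, (∀ x ∈ Ioo x_l epsmax, TC x ≤ TC y) → ψ y = 0 := by
    intro y hy hmax
    have hloc : IsLocalMax TC y :=
      IsMaxOn.isLocalMax (isMaxOn_iff.mpr hmax) (isOpen_Ioo.mem_nhds hy)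
    have h0 := hloc.hasDerivAt_eq_zero (hTC' y hy.1.le hy.2.le)
    have hy0 : 0 < y := hxl0.trans hy.1
    have hne : (2 * A / y ^ 3) ≠ 0 := ne_of_gt (by positivity)
    exact (mul_eq_zero.mp h0).resolve_left hne
  have hψxs : ψ xs = 0 := hcrit xs hxsIoo hmaxIoo
  -- the first-order condition
  have hFOC : f xs / F xs = (1 / xs) * Real.log (F xs ^ 2 / (1 - p_e)) := by
    have hy0 : 0 < xs := hxl0.trans hxsIoo.1
    have hFy : 0 < F xs := hFpos xs hxsIoo.1.le hxsIoo.2.le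
    have hlog : Real.log (F xs ^ 2 / (1 - p_e)) = 2 * Real.log (F xs) + B := by
      rw [Real.log_div (by positivity) hp1.ne', Real.log_pow, hBlog]
      push_cast; ring
    have hval : xs * f xs / F xs = 2 * Real.log (F xs) + B := by
      have := hψxs
      simp only [hψdef, sub_eq_zero] at this
      exact this
    rw [hlog, ← hval]
    field_simp
  -- antitonicity of f
  have hanti : AntitoneOn f (Icc x_l epsmax) := by
    have hfd : ∀ x ∈ Icc x_l epsmax, DifferentiableAt ℝ F x :=
      fun x hx => (hF x ⟨hxl0.trans_le hx.1, hx.2⟩).differentiableAt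
    have h := (hconc.subset (Icc_subset_Icc hxl0.le le_rfl)
      (convex_Icc _ _)).antitoneOn_deriv hfd
    intro u hu v hv huv
    have := h hu hv huv
    rwa [(hF u ⟨hxl0.trans_le hu.1, hu.2⟩).deriv,
      (hF v ⟨hxl0.trans_le hv.1, hv.2⟩).deriv] at this
  -- f' is nonpositive
  have hf'np : ∀ x ∈ Ioo x_l epsmax, f' x ≤ 0 := by
    intro x hx
    have hx' : x ∈ Ioo 0 epsmax := ⟨hxl0.trans hx.1, hx.2⟩
    have hs := hasDerivAt_iff_tendsto_slope.mp (hf x hx')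
    have hlef : 𝓝[>] x ≤ 𝓝[≠] x := nhdsWithin_mono _ fun y hy => ne_of_gt hy
    have hev : ∀ᶠ y in 𝓝[>] x, slope f x y ≤ 0 := by
      filter_upwards [Ioo_mem_nhdsGT hx.2] with y hy
      rw [slope_def_field]
      apply div_nonpos_of_nonpos_of_nonneg
      · have := hanti (mem_Icc.mpr ⟨hx.1.le, hx.2.le⟩)
          (mem_Icc.mpr ⟨(hx.1.trans hy.1).le, hy.2.le⟩) hy.1.le
        linarith
      · linarith [hy.1]
    exact le_of_tendsto (hs.mono_left hlef) hev
  -- derivative of ψ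
  have hψ' : ∀ x ∈ Ioo x_l epsmax, HasDerivAt ψ
      (((1 * f x + x * f' x) * F x - x * f x * f x) / F x ^ 2 - 2 * (f x / F x)) x := by
    intro x hx
    have hx0 : (0:ℝ) < x := hxl0.trans hx.1
    have hFx : 0 < F x := hFpos x hx.1.le hx.2.le
    have hdF := hF x ⟨hx0, hx.2.le⟩
    have hdf := hf x ⟨hx0, hx.2⟩
    have h1 : HasDerivAt (fun y => y * f y) (1 * f x + x * f' x) x :=
      (hasDerivAt_id x).mul hdf
    have h2 := h1.div hdF hFx.ne'
    have h3 : HasDerivAt (fun y => 2 * Real.log (F y) + B) (2 * (f x / F x)) x :=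
      ((hdF.log hFx.ne').const_mul 2).add_const B
    exact h2.sub h3
  -- uniqueness core: ψ cannot vanish twice
  have huniq : ∀ a b, a ∈ Ioo x_l epsmax → b ∈ Ioo x_l epsmax → a < b →
      ψ a = 0 → ψ b = 0 → False := by
    intro a b ha hb hab hψa hψb
    have hsub : Icc a b ⊆ Ioo x_l epsmax :=
      fun x hx => ⟨ha.1.trans_le hx.1, hx.2.trans_lt hb.2⟩
    have hb0 : 0 < b := hxl0.trans hb.1
    have hFb : 0 < F b := hFpos b hb.1.le hb.2.le
    have hfb : 0 < f b := by
      have hGb := hGpos b hb.1 hb.2.le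
      have hval : b * f b / F b = 2 * Real.log (F b) + B := by
        have := hψb
        simp only [hψdef, sub_eq_zero] at this
        exact this
      have h2 : b * f b = (2 * Real.log (F b) + B) * F b :=
        (div_eq_iff hFb.ne').mp hval
      have hbf : 0 < b * f b := by rw [h2]; exact mul_pos hGb hFb
      by_contra hcon
      push_neg at hcon
      exact absurd hbf (not_lt.mpr (mul_nonpos_of_nonneg_of_nonpos hb0.le hcon))
    have hfpos : ∀ x ∈ Icc a b, 0 < f x := by
      intro x hx
      have hx' := hsub hx
      exact hfb.trans_le (hanti (mem_Icc.mpr ⟨hx'.1.le, hx'.2.le⟩)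
        (mem_Icc.mpr ⟨hb.1.le, hb.2.le⟩) hx.2)
    have hψcont : ContinuousOn ψ (Icc a b) :=
      fun x hx => (hψ' x (hsub hx)).continuousAt.continuousWithinAt
    have hψderiv_neg : ∀ x ∈ interior (Icc a b), deriv ψ x < 0 := by
      rw [interior_Icc]
      intro x hx
      have hxI : x ∈ Ioo x_l epsmax := hsub ⟨hx.1.le, hx.2.le⟩
      rw [(hψ' x hxI).deriv]
      have hx0 : 0 < x := hxl0.trans hxI.1
      have hFx : 0 < F x := hFpos x hxI.1.le hxI.2.le
      have hfx : 0 < f x := hfpos x ⟨hx.1.le, hx.2.le⟩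
      have hf'x : f' x ≤ 0 := hf'np x hxI
      have hE : ((1 * f x + x * f' x) * F x - x * f x * f x) / F x ^ 2 - 2 * (f x / F x)
          = ((1 * f x + x * f' x) * F x - x * f x * f x - 2 * f x * F x) / F x ^ 2 := by
        field_simp
      rw [hE]
      apply div_neg_of_neg_of_pos _ (by positivity)
      nlinarith [mul_pos hfx hFx, mul_nonneg (mul_nonneg hx0.le (neg_nonneg.mpr hf'x)) hFx.le,
        mul_pos (mul_pos hx0 hfx) hfx]
    have hstrict : StrictAntiOn ψ (Icc a b) :=
      strictAntiOn_of_deriv_neg (convex_Icc a b) hψcont hψderiv_neg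
    have := hstrict (left_mem_Icc.mpr hab.le) (right_mem_Icc.mpr hab.le) hab
    rw [hψa, hψb] at this
    exact lt_irrefl 0 this
  refine ⟨xs, hxsIoo, hmaxIoo, hFOC, ?_⟩
  intro y hy hymax
  have hψy := hcrit y hy hymax
  rcases lt_trichotomy y xs with h | h | h
  · exact (huniq y xs hy hxsIoo h hψy hψxs).elim
  · exact h
  · exact (huniq xs y hxsIoo hy h hψxs hψy).elim
end

section
/- Let F be defined piecewise on [0,π] by F(x) = b(1 − e^{−c₁x})/(1 − e^{−c₁a}) for 0 ≤ x ≤ a and F(x) = b + (1−b)(1 − e^{−c₂(x−a)})/(1 − e^{−c₂(π−a)}) for a < x ≤ π, with a = 1/2, b = 1/2, c₁ = 15, c₂ = 1. Then F is not concave on [0,π], but x·F'(x)/F(x) ≤ 1 holds for all x ∈ (0,π) where F is differentiable. -/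
open Real Set

set_option maxHeartbeats 1000000 in
theorem stmt11 :
    let a : ℝ := 1 / 2
    let b : ℝ := 1 / 2
    let c₁ : ℝ := 15
    let c₂ : ℝ := 1
    let F : ℝ → ℝ := fun x =>
      if x ≤ a then b * (1 - Real.exp (-c₁ * x)) / (1 - Real.exp (-c₁ * a))
      else b + (1 - b) * (1 - Real.exp (-c₂ * (x - a))) / (1 - Real.exp (-c₂ * (π - a)))
    ¬ ConcaveOn ℝ (Icc 0 π) F ∧
    ∀ x ∈ Ioo (0 : ℝ) π, DifferentiableAt ℝ F x → x * deriv F x / F x ≤ 1 := by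
  intro a b c₁ c₂ F
  have hπ3 : (3:ℝ) < π := Real.pi_gt_three
  have hF : ∀ y : ℝ, F y = if y ≤ (1/2:ℝ) then
      (1/2) * (1 - Real.exp (-15 * y)) / (1 - Real.exp (-15 * (1/2)))
    else
      1/2 + (1 - 1/2) * (1 - Real.exp (-1 * (y - 1/2))) / (1 - Real.exp (-1 * (π - 1/2))) :=
    fun _ => rfl
  have hD₁ : 0 < 1 - Real.exp (-15 * (1/2:ℝ)) := by
    have : Real.exp (-15 * (1/2:ℝ)) < 1 := by
      rw [Real.exp_lt_one_iff]; norm_num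
    linarith
  have hD₁' : 1 - Real.exp (-15 * (1/2:ℝ)) ≤ 1 := by
    have := Real.exp_pos (-15 * (1/2:ℝ)); linarith
  have hD₂ : 0 < 1 - Real.exp (-1 * (π - 1/2:ℝ)) := by
    have : Real.exp (-1 * (π - 1/2:ℝ)) < 1 := by
      rw [Real.exp_lt_one_iff]; linarith
    linarith
  have hD₂' : 1 - Real.exp (-1 * (π - 1/2:ℝ)) ≤ 1 := by
    have := Real.exp_pos (-1 * (π - 1/2:ℝ)); linarith
  constructor
  · -- not concave
    intro hcon
    have h4 : (2/5:ℝ) ∈ Icc 0 π := by constructor <;> [norm_num; linarith]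
    have h6 : (3/5:ℝ) ∈ Icc 0 π := by constructor <;> [norm_num; linarith]
    have key := hcon.2 h4 h6 (by norm_num : (0:ℝ) ≤ 1/2) (by norm_num : (0:ℝ) ≤ 1/2)
      (by norm_num : (1/2:ℝ) + 1/2 = 1)
    simp only [smul_eq_mul] at key
    have hpt : (1/2:ℝ) * (2/5) + 1/2 * (3/5) = 1/2 := by norm_num
    rw [hpt, hF, hF, hF, if_pos (by norm_num : (2/5:ℝ) ≤ 1/2),
      if_pos (le_refl (1/2:ℝ)), if_neg (by norm_num : ¬ (3/5:ℝ) ≤ 1/2)] at key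
    have hhalf : (1/2:ℝ) * (1 - Real.exp (-15 * (1/2))) / (1 - Real.exp (-15 * (1/2))) = 1/2 := by
      rw [mul_div_assoc, div_self (ne_of_gt hD₁), mul_one]
    rw [hhalf] at key
    -- numeric bounds
    have he1 : (2.7:ℝ) < Real.exp 1 := by
      have := Real.exp_one_gt_d9; linarith
    have hA : Real.exp (-15 * (2/5:ℝ)) ≤ 1/64 := by
      rw [show (-15 * (2/5:ℝ)) = -6 by norm_num, Real.exp_neg]
      have h2 : Real.exp (6:ℝ) = Real.exp 1 ^ (6:ℕ) := by
        rw [← Real.exp_nat_mul]; norm_num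
      have h64 : (64:ℝ) ≤ Real.exp 6 := by
        rw [h2]
        have hp6 := pow_le_pow_left₀ (show (0:ℝ) ≤ 2.7 by norm_num) he1.le 6
        norm_num at hp6
        linarith
      have := Real.exp_pos (6:ℝ)
      rw [inv_le_comm₀ (by linarith) (by norm_num)]
      linarith
    have hB : Real.exp (-1 * ((3/5:ℝ) - 1/2)) ≤ 10/11 := by
      rw [show (-1 * ((3/5:ℝ) - 1/2)) = -(1/10) by norm_num, Real.exp_neg]
      have h11 : (11/10:ℝ) ≤ Real.exp (1/10) := by
        have := Real.add_one_le_exp (1/10:ℝ); linarith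
      rw [inv_le_comm₀ (by linarith) (by norm_num)]
      linarith
    have t1 : (1/2:ℝ) * (1 - Real.exp (-15 * (2/5:ℝ))) ≤
        (1/2:ℝ) * (1 - Real.exp (-15 * (2/5:ℝ))) / (1 - Real.exp (-15 * (1/2:ℝ))) := by
      rw [le_div_iff₀ hD₁]
      have hA0 := Real.exp_pos (-15 * (2/5:ℝ))
      nlinarith
    have t2 : ((1:ℝ) - 1/2) * (1 - Real.exp (-1 * ((3/5:ℝ) - 1/2))) ≤
        ((1:ℝ) - 1/2) * (1 - Real.exp (-1 * ((3/5:ℝ) - 1/2))) / (1 - Real.exp (-1 * (π - 1/2:ℝ))) := by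
      rw [le_div_iff₀ hD₂]
      have hB0 := Real.exp_pos (-1 * ((3/5:ℝ) - 1/2))
      nlinarith
    linarith [key, t1, t2, hA, hB]
  · -- derivative bound
    rintro x ⟨hx0, hxπ⟩ hdiff
    rcases lt_trichotomy x (1/2) with hlt | heq | hgt
    · -- first branch
      have hderiv : HasDerivAt (fun y => (1/2:ℝ) * (1 - Real.exp (-15 * y)) /
          (1 - Real.exp (-15 * (1/2)))) ((1/2) * (15 * Real.exp (-15 * x)) /
          (1 - Real.exp (-15 * (1/2)))) x := by
        have h1 : HasDerivAt (fun y : ℝ => -15 * y) (-15) x := by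
          simpa using (hasDerivAt_id x).const_mul (-15:ℝ)
        have h2 := ((hasDerivAt_const x (1:ℝ)).sub h1.exp).const_mul (1/2:ℝ)
        have h3 := h2.div_const (1 - Real.exp (-15 * (1/2)))
        simp only [Pi.sub_apply] at h3
        exact h3.congr_deriv (by ring)
      have hEq : F =ᶠ[nhds x] (fun y => (1/2:ℝ) * (1 - Real.exp (-15 * y)) /
          (1 - Real.exp (-15 * (1/2)))) := by
        filter_upwards [Iio_mem_nhds hlt] with y hy
        rw [hF, if_pos (le_of_lt hy)]
      have hd : deriv F x = (1/2) * (15 * Real.exp (-15 * x)) /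
          (1 - Real.exp (-15 * (1/2))) := by
        rw [hEq.deriv_eq, hderiv.deriv]
      have hFx : F x = (1/2) * (1 - Real.exp (-15 * x)) / (1 - Real.exp (-15 * (1/2))) := by
        rw [hF, if_pos (le_of_lt hlt)]
      rw [hd, hFx]
      have hEpos := Real.exp_pos (-15 * x)
      have hElt : Real.exp (-15 * x) < 1 := by
        rw [Real.exp_lt_one_iff]; nlinarith
      have hkey : 15 * x * Real.exp (-15 * x) ≤ 1 - Real.exp (-15 * x) := by
        have h1 := Real.add_one_le_exp (15 * x)
        have h2 : Real.exp (-15 * x) * Real.exp (15 * x) = 1 := by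
          rw [← Real.exp_add]; norm_num
        nlinarith
      have hnum : (0:ℝ) < 1 - Real.exp (-15 * x) := by linarith
      rw [div_le_one (div_pos (by linarith) hD₁)]
      rw [show x * (1/2 * (15 * Real.exp (-15 * x)) / (1 - Real.exp (-15 * (1/2)))) =
        (x * (1/2 * (15 * Real.exp (-15 * x)))) / (1 - Real.exp (-15 * (1/2))) from by ring]
      rw [div_le_div_iff₀ hD₁ hD₁]
      nlinarith [mul_le_mul_of_nonneg_right hkey hD₁.le]
    · -- kink point: contradiction with differentiability
      subst heq
      have hg₁ : HasDerivAt (fun y => (1/2:ℝ) * (1 - Real.exp (-15 * y)) /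
          (1 - Real.exp (-15 * (1/2)))) ((1/2) * (15 * Real.exp (-15 * (1/2))) /
          (1 - Real.exp (-15 * (1/2)))) (1/2) := by
        have h1 : HasDerivAt (fun y : ℝ => -15 * y) (-15) (1/2:ℝ) := by
          simpa using (hasDerivAt_id (1/2:ℝ)).const_mul (-15:ℝ)
        have h2 := ((hasDerivAt_const (1/2:ℝ) (1:ℝ)).sub h1.exp).const_mul (1/2:ℝ)
        have h3 := h2.div_const (1 - Real.exp (-15 * (1/2)))
        simp only [Pi.sub_apply] at h3
        exact h3.congr_deriv (by ring)
      have hg₂ : HasDerivAt (fun y => (1/2:ℝ) + (1 - 1/2) * (1 - Real.exp (-1 * (y - 1/2))) /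
          (1 - Real.exp (-1 * (π - 1/2)))) ((1 - 1/2) * Real.exp (-1 * ((1/2:ℝ) - 1/2)) /
          (1 - Real.exp (-1 * (π - 1/2)))) (1/2) := by
        have h1 : HasDerivAt (fun y : ℝ => -1 * (y - 1/2)) (-1) (1/2:ℝ) := by
          exact (((hasDerivAt_id (1/2:ℝ)).sub_const (1/2:ℝ)).const_mul (-1:ℝ)).congr_deriv (by ring)
        have h2 := (((hasDerivAt_const (1/2:ℝ) (1:ℝ)).sub h1.exp).const_mul
          ((1:ℝ) - 1/2)).div_const (1 - Real.exp (-1 * (π - 1/2)))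
        have h3 := h2.const_add (1/2:ℝ)
        simp only [Pi.sub_apply] at h3
        exact h3.congr_deriv (by ring)
      have hw₁ : HasDerivWithinAt F ((1/2) * (15 * Real.exp (-15 * (1/2:ℝ))) /
          (1 - Real.exp (-15 * (1/2)))) (Iic (1/2:ℝ)) (1/2) := by
        refine hg₁.hasDerivWithinAt.congr (fun y hy => ?_) ?_
        · rw [hF, if_pos (mem_Iic.mp hy)]
        · rw [hF, if_pos (le_refl _)]
      have hw₂ : HasDerivWithinAt F ((1 - 1/2) * Real.exp (-1 * ((1/2:ℝ) - 1/2)) /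
          (1 - Real.exp (-1 * (π - 1/2)))) (Ici (1/2:ℝ)) (1/2) := by
        refine hg₂.hasDerivWithinAt.congr (fun y hy => ?_) ?_
        · rcases eq_or_lt_of_le (mem_Ici.mp hy) with h | h
          · rw [hF, if_pos (le_of_eq h.symm)]
            rw [← h]
            rw [mul_div_assoc, div_self (ne_of_gt hD₁), mul_one]
            norm_num
          · rw [hF, if_neg (not_le.mpr h)]
        · rw [hF, if_pos (le_refl _)]
          rw [mul_div_assoc, div_self (ne_of_gt hD₁), mul_one]
          norm_num
      have hda := hdiff.hasDerivAt
      have e₁ := (uniqueDiffOn_Iic (1/2:ℝ) _ self_mem_Iic).eq_deriv _ hw₁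
        (hda.hasDerivWithinAt (s := Iic (1/2:ℝ)))
      have e₂ := (uniqueDiffOn_Ici (1/2:ℝ) _ self_mem_Ici).eq_deriv _ hw₂
        (hda.hasDerivWithinAt (s := Ici (1/2:ℝ)))
      exfalso
      rw [← e₂] at e₁
      -- e₁ : small slope = big slope, contradiction
      have he1 : (2.7:ℝ) < Real.exp 1 := by
        have := Real.exp_one_gt_d9; linarith
      have hex : (16:ℝ) < Real.exp (15/2) := by
        have h3 : Real.exp (3:ℝ) = Real.exp 1 ^ (3:ℕ) := by
          rw [← Real.exp_nat_mul]; norm_num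
        have : (16:ℝ) < Real.exp 3 := by
          rw [h3]
          have hp3 := pow_le_pow_left₀ (show (0:ℝ) ≤ 2.7 by norm_num) he1.le 3
          norm_num at hp3
          linarith
        have hmono : Real.exp (3:ℝ) ≤ Real.exp (15/2) := Real.exp_le_exp.mpr (by norm_num)
        linarith
      have hE : Real.exp (-15 * (1/2:ℝ)) = (Real.exp (15/2))⁻¹ := by
        rw [show (-15 * (1/2:ℝ)) = -(15/2) by norm_num, Real.exp_neg]
      -- LHS < 1/2 ≤ RHS
      have hlhs : (1/2:ℝ) * (15 * Real.exp (-15 * (1/2))) / (1 - Real.exp (-15 * (1/2))) < 1/2 := by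
        have hEmul : Real.exp (-15 * (1/2:ℝ)) * Real.exp (15/2) = 1 := by
          rw [← Real.exp_add]; norm_num
        rw [div_lt_iff₀ hD₁]
        nlinarith [mul_pos (sub_pos.mpr hex) (Real.exp_pos (-15 * (1/2:ℝ))), hEmul]
      have hrhs : (1/2:ℝ) ≤ (1 - 1/2) * Real.exp (-1 * ((1/2:ℝ) - 1/2)) /
          (1 - Real.exp (-1 * (π - 1/2))) := by
        rw [show (-1 * ((1/2:ℝ) - 1/2)) = 0 by norm_num, Real.exp_zero]
        rw [le_div_iff₀ hD₂]
        nlinarith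
      linarith [e₁, hlhs, hrhs]
    · -- second branch
      have hderiv : HasDerivAt (fun y => (1/2:ℝ) + (1 - 1/2) * (1 - Real.exp (-1 * (y - 1/2))) /
          (1 - Real.exp (-1 * (π - 1/2)))) ((1 - 1/2) * Real.exp (-1 * (x - 1/2)) /
          (1 - Real.exp (-1 * (π - 1/2)))) x := by
        have h1 : HasDerivAt (fun y : ℝ => -1 * (y - 1/2)) (-1) x := by
          exact (((hasDerivAt_id x).sub_const (1/2:ℝ)).const_mul (-1:ℝ)).congr_deriv (by ring)
        have h2 := (((hasDerivAt_const x (1:ℝ)).sub h1.exp).const_mul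
          ((1:ℝ) - 1/2)).div_const (1 - Real.exp (-1 * (π - 1/2)))
        have h3 := h2.const_add (1/2:ℝ)
        simp only [Pi.sub_apply] at h3
        exact h3.congr_deriv (by ring)
      have hEq : F =ᶠ[nhds x] (fun y => (1/2:ℝ) + (1 - 1/2) * (1 - Real.exp (-1 * (y - 1/2))) /
          (1 - Real.exp (-1 * (π - 1/2)))) := by
        filter_upwards [Ioi_mem_nhds hgt] with y hy
        rw [hF, if_neg (not_le.mpr hy)]
      have hd : deriv F x = (1 - 1/2) * Real.exp (-1 * (x - 1/2)) /
          (1 - Real.exp (-1 * (π - 1/2))) := by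
        rw [hEq.deriv_eq, hderiv.deriv]
      have hFx : F x = 1/2 + (1 - 1/2) * (1 - Real.exp (-1 * (x - 1/2))) /
          (1 - Real.exp (-1 * (π - 1/2))) := by
        rw [hF, if_neg (not_le.mpr hgt)]
      rw [hd, hFx]
      have hEpos := Real.exp_pos (-1 * (x - 1/2))
      have hElt : Real.exp (-1 * (x - 1/2)) < 1 := by
        rw [Real.exp_lt_one_iff]; nlinarith
      have hS := Real.add_one_le_exp (x - 1/2)
      have hSE : Real.exp (-1 * (x - 1/2)) * Real.exp (x - 1/2) = 1 := by
        rw [← Real.exp_add]; ring_nf; exact Real.exp_zero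
      have hD₂half : (1/2:ℝ) ≤ 1 - Real.exp (-1 * (π - 1/2)) := by
        have h1 : Real.exp (-1 * (π - 1/2:ℝ)) ≤ 1/2 := by
          rw [show (-1 * (π - 1/2:ℝ)) = -(π - 1/2) by ring, Real.exp_neg]
          have h2 : (2:ℝ) ≤ Real.exp (π - 1/2) := by
            have := Real.add_one_le_exp (π - 1/2:ℝ); linarith
          have hp := Real.exp_pos (π - 1/2:ℝ)
          rw [inv_eq_one_div, div_le_iff₀ hp]
          linarith
        linarith
      have hFpos : (0:ℝ) < 1/2 + (1 - 1/2) * (1 - Real.exp (-1 * (x - 1/2))) /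
          (1 - Real.exp (-1 * (π - 1/2))) := by
        have : (0:ℝ) ≤ (1 - 1/2) * (1 - Real.exp (-1 * (x - 1/2))) /
            (1 - Real.exp (-1 * (π - 1/2))) :=
          div_nonneg (mul_nonneg (by norm_num) (by linarith)) hD₂.le
        linarith
      rw [div_le_one hFpos]
      rw [show x * ((1 - 1/2) * Real.exp (-1 * (x - 1/2)) / (1 - Real.exp (-1 * (π - 1/2)))) =
        (x * ((1 - 1/2) * Real.exp (-1 * (x - 1/2)))) / (1 - Real.exp (-1 * (π - 1/2)))
        from by ring]
      rw [div_le_iff₀ hD₂, add_mul, div_mul_cancel₀ _ (ne_of_gt hD₂)]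
      have hSpos := Real.exp_pos (x - 1/2)
      have hstep : (x + 1) * Real.exp (-1 * (x - 1/2)) ≤ 3/2 := by
        have h1 : x + 1 ≤ 3/2 * Real.exp (x - 1/2) := by nlinarith [hS, hgt]
        calc (x + 1) * Real.exp (-1 * (x - 1/2))
            ≤ (3/2 * Real.exp (x - 1/2)) * Real.exp (-1 * (x - 1/2)) :=
              mul_le_mul_of_nonneg_right h1 hEpos.le
          _ = 3/2 := by
              rw [mul_assoc, mul_comm (Real.exp (x - 1/2)), hSE, mul_one]
      nlinarith [hstep, hD₂half, hEpos]
end
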